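/- For every g ∈ L²±(ℝ₊) and every t > 0, the past-smoothed function converges pointwise to the left limit: g⁻(t,ε) → g(t⁻) as ε → 0⁺. -/

import Mathlib

open MeasureTheory Filter Set

/-- The exponential kernel `G_ε(τ) = (γ/(4ε))·exp(−γ|τ|/(2ε))`. -/
noncomputable def Gker (γ ε τ : ℝ) : ℝ := (γ / (4 * ε)) * Real.exp (-(γ * |τ|) / (2 * ε))

lemma Gker_integral (γ ε t : ℝ) (hε : 0 < ε) (ht : 0 ≤ t) :
    ∫ τ in Ioc (0:ℝ) t, 2 * Gker γ ε τ = 1 - Real.exp (-(γ / (2 * ε) * t)) := by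
  rw [← intervalIntegral.integral_of_le ht]
  set k := γ / (2 * ε) with hk
  have h1 : EqOn (fun τ => 2 * Gker γ ε τ) (fun τ => k * Real.exp (-(k * τ)))
      (uIcc (0:ℝ) t) := by
    intro τ hτ
    rw [uIcc_of_le ht] at hτ
    simp only [Gker]
    rw [abs_of_nonneg hτ.1]
    have h2 : -(γ * τ) / (2 * ε) = -(k * τ) := by rw [hk]; ring
    rw [h2, hk]
    ring
  rw [intervalIntegral.integral_congr h1]
  have hder : ∀ x ∈ uIcc (0:ℝ) t,
      HasDerivAt (fun τ => -Real.exp (-(k * τ))) (k * Real.exp (-(k * x))) x := by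
    intro x _
    have h := (((hasDerivAt_id x).const_mul k).neg.exp).neg
    refine h.congr_deriv ?_
    simp only [Pi.neg_apply, id_eq]
    ring
  have hint : IntervalIntegrable (fun τ => k * Real.exp (-(k * τ))) volume 0 t :=
    (continuous_const.mul
      (Real.continuous_exp.comp (continuous_const.mul continuous_id).neg)).intervalIntegrable 0 t
  rw [intervalIntegral.integral_eq_sub_of_hasDerivAt hder hint]
  simp only [mul_zero, neg_zero, Real.exp_zero]
  ring

/-- For `g ∈ L²±(ℝ₊)` and `t > 0`, the past-smoothed function
`g⁻(t,ε) = 2∫₀^t g(t−τ) G_ε(τ) dτ` converges to the left limit `g(t⁻)` as `ε → 0⁺`. -/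
theorem pastSmoothed_tendsto_leftLimit
    (γ : ℝ) (hγ : 0 < γ) (g : ℝ → ℂ)
    (hbdd : ∃ C : ℝ, ∀ s : ℝ, 0 ≤ s → ‖g s‖ ≤ C)
    (hL2 : MemLp g 2 (volume.restrict (Ioi (0 : ℝ))))
    (hright : ∀ s : ℝ, 0 ≤ s → ∃ L : ℂ, Tendsto g (nhdsWithin s (Ioi s)) (nhds L))
    (hleft : ∀ s : ℝ, 0 < s → ∃ L : ℂ, Tendsto g (nhdsWithin s (Iio s)) (nhds L))
    (t : ℝ) (ht : 0 < t) (gm : ℂ)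
    (hgm : Tendsto g (nhdsWithin t (Iio t)) (nhds gm)) :
    Tendsto (fun ε : ℝ => 2 * ∫ τ in (0 : ℝ)..t, g (t - τ) * (Gker γ ε τ : ℂ))
      (nhdsWithin 0 (Ioi 0)) (nhds gm) := by
  set s : Set ℝ := Ioc 0 t with hs_def
  set φ : ℝ → ℝ → ℝ := fun ε τ => 2 * Gker γ ε τ with hφ_def
  set G : ℝ → ℂ := fun τ => g (t - τ) with hG_def
  -- measurability of G on s
  have hGm : AEStronglyMeasurable G (volume.restrict s) := by
    obtain ⟨f, hf_sm, hfg⟩ := hL2.aestronglyMeasurable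
    have hqmp : Measure.QuasiMeasurePreserving (fun τ : ℝ => t - τ) volume volume :=
      MeasureTheory.quasiMeasurePreserving_sub_left volume t
    have hfg' : ∀ᵐ x ∂volume, x ∈ Ioi (0:ℝ) → g x = f x :=
      (ae_restrict_iff' measurableSet_Ioi).1 hfg
    have h1 : ∀ᵐ τ ∂volume, t - τ ∈ Ioi (0:ℝ) → g (t - τ) = f (t - τ) := hqmp.ae hfg'
    have h2 : ∀ᵐ τ ∂volume, τ ≠ t := by
      have hvol : volume ({t} : Set ℝ) = 0 := measure_singleton t
      rw [ae_iff]
      simpa using hvol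
    have hae : G =ᵐ[volume.restrict s] (fun τ => f (t - τ)) := by
      rw [EventuallyEq, ae_restrict_iff' measurableSet_Ioc]
      filter_upwards [h1, h2] with τ h1τ h2τ hτ
      refine h1τ ?_
      simp only [mem_Ioi]
      rcases lt_or_eq_of_le hτ.2 with h | h
      · linarith
      · exact absurd h h2τ
    exact AEStronglyMeasurable.congr
      ((hf_sm.comp_measurable (measurable_const.sub measurable_id)).aestronglyMeasurable) hae.symm
  -- integrability of G on s
  obtain ⟨C, hC⟩ := hbdd
  have hmg : IntegrableOn G s volume := by
    refine Integrable.mono' (g := fun _ => C) ?_ hGm ?_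
    · exact integrableOn_const (by simp [hs_def])
    · filter_upwards [ae_restrict_mem measurableSet_Ioc] with τ hτ
      exact hC (t - τ) (by linarith [hτ.2])
  -- limit of G at 0 within s
  have hcg : Tendsto G (nhdsWithin 0 s) (nhds gm) := by
    apply hgm.comp
    rw [tendsto_nhdsWithin_iff]
    constructor
    · have h0 : Tendsto (fun τ : ℝ => t - τ) (nhds 0) (nhds (t - 0)) :=
        tendsto_const_nhds.sub tendsto_id
      rw [sub_zero] at h0
      exact h0.mono_left nhdsWithin_le_nhds
    · filter_upwards [self_mem_nhdsWithin] with τ hτ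
      exact sub_lt_self t hτ.1
  -- nonnegativity
  have hnφ : ∀ᶠ ε in nhdsWithin (0:ℝ) (Ioi 0), ∀ τ ∈ s, 0 ≤ φ ε τ := by
    filter_upwards [self_mem_nhdsWithin] with ε hε τ _
    have hε' : (0:ℝ) < ε := hε
    have hG0 : 0 ≤ Gker γ ε τ := by
      unfold Gker
      positivity
    simp only [hφ_def]
    linarith
  -- uniform convergence to 0 away from 0
  have hlφ : ∀ u : Set ℝ, IsOpen u → (0:ℝ) ∈ u →
      TendstoUniformlyOn φ 0 (nhdsWithin (0:ℝ) (Ioi 0)) (s \ u) := by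
    intro u hu h0u
    obtain ⟨δ, hδ, hball⟩ := Metric.isOpen_iff.1 hu 0 h0u
    rw [Metric.tendstoUniformlyOn_iff]
    intro η hη
    have hatTop : Tendsto (fun ε : ℝ => γ * δ / (2 * ε)) (nhdsWithin 0 (Ioi 0)) atTop := by
      have h1 : Tendsto (fun ε : ℝ => (γ * δ / 2) * ε⁻¹) (nhdsWithin 0 (Ioi 0)) atTop :=
        tendsto_inv_nhdsGT_zero.const_mul_atTop (by positivity)
      exact h1.congr (fun ε => by ring)
    have hkey : Tendsto (fun ε : ℝ => γ / (2 * ε) * Real.exp (-(γ * δ / (2 * ε))))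
        (nhdsWithin 0 (Ioi 0)) (nhds 0) := by
      have h2 : Tendsto (fun y : ℝ => (1 / δ) * (y * Real.exp (-y))) atTop (nhds 0) := by
        have h3 := (Real.tendsto_pow_mul_exp_neg_atTop_nhds_zero 1).const_mul (1 / δ)
        simpa using h3
      have h3 := h2.comp hatTop
      refine h3.congr (fun ε => ?_)
      have hc : (1 / δ) * (γ * δ / (2 * ε)) = γ / (2 * ε) := by
        field_simp
      simp only [Function.comp]
      rw [← mul_assoc, hc]
    filter_upwards [hkey.eventually (gt_mem_nhds hη), self_mem_nhdsWithin] with ε hε1 hε2 τ hτ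
    have hε' : (0:ℝ) < ε := hε2
    have hτ0 : (0:ℝ) < τ := hτ.1.1
    have hτδ : δ ≤ τ := by
      have h5 : τ ∉ Metric.ball 0 δ := fun h => hτ.2 (hball h)
      simp only [Metric.mem_ball, Real.dist_eq, sub_zero, abs_of_pos hτ0, not_lt] at h5
      exact h5
    have hφle : φ ε τ ≤ γ / (2 * ε) * Real.exp (-(γ * δ / (2 * ε))) := by
      simp only [hφ_def, Gker]
      rw [abs_of_pos hτ0]
      have hexp : Real.exp (-(γ * τ) / (2 * ε)) ≤ Real.exp (-(γ * δ / (2 * ε))) := by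
        apply Real.exp_le_exp.2
        have heq : -(γ * δ / (2 * ε)) = -(γ * δ) / (2 * ε) := by ring
        rw [heq, div_le_div_iff₀ (by positivity) (by positivity)]
        have h6 : γ * δ ≤ γ * τ := mul_le_mul_of_nonneg_left hτδ hγ.le
        nlinarith
      calc 2 * (γ / (4 * ε) * Real.exp (-(γ * τ) / (2 * ε)))
          = γ / (2 * ε) * Real.exp (-(γ * τ) / (2 * ε)) := by ring
        _ ≤ γ / (2 * ε) * Real.exp (-(γ * δ / (2 * ε))) := by
            apply mul_le_mul_of_nonneg_left hexp (by positivity)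
    have hφ0 : 0 ≤ φ ε τ := by
      have hG0 : 0 ≤ Gker γ ε τ := by unfold Gker; positivity
      simp only [hφ_def]; linarith
    rw [Pi.zero_apply, dist_zero_left, Real.norm_eq_abs, abs_of_nonneg hφ0]
    exact lt_of_le_of_lt hφle hε1
  -- integral of φ tends to 1
  have hiφ : Tendsto (fun ε => ∫ τ in s, φ ε τ) (nhdsWithin (0:ℝ) (Ioi 0)) (nhds 1) := by
    have heq : (fun ε : ℝ => 1 - Real.exp (-(γ / (2 * ε) * t)))
        =ᶠ[nhdsWithin (0:ℝ) (Ioi 0)] (fun ε => ∫ τ in s, φ ε τ) := by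
      filter_upwards [self_mem_nhdsWithin] with ε hε
      exact (Gker_integral γ ε t hε ht.le).symm
    have hatTop : Tendsto (fun ε : ℝ => γ / (2 * ε) * t) (nhdsWithin (0:ℝ) (Ioi 0)) atTop := by
      have h1 : Tendsto (fun ε : ℝ => (γ * t / 2) * ε⁻¹) (nhdsWithin (0:ℝ) (Ioi 0)) atTop :=
        tendsto_inv_nhdsGT_zero.const_mul_atTop (by positivity)
      exact h1.congr (fun ε => by ring)
    have h2 : Tendsto (fun ε : ℝ => 1 - Real.exp (-(γ / (2 * ε) * t)))
        (nhdsWithin (0:ℝ) (Ioi 0)) (nhds (1 - 0)) :=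
      tendsto_const_nhds.sub
        (Real.tendsto_exp_atBot.comp (tendsto_neg_atTop_atBot.comp hatTop))
    rw [sub_zero] at h2
    exact h2.congr' heq
  -- measurability of φ
  have h'iφ : ∀ᶠ ε in nhdsWithin (0:ℝ) (Ioi 0),
      AEStronglyMeasurable (φ ε) (volume.restrict s) := by
    refine Eventually.of_forall (fun ε => ?_)
    have hc : Continuous (φ ε) := by
      simp only [hφ_def, Gker]
      exact continuous_const.mul (continuous_const.mul (Real.continuous_exp.comp
        ((continuous_const.mul continuous_abs).neg.div_const _)))
    exact hc.aestronglyMeasurable.restrict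
  have main := tendsto_setIntegral_peak_smul_of_integrableOn_of_tendsto
    (μ := volume) (l := nhdsWithin (0:ℝ) (Ioi 0)) (x₀ := (0:ℝ))
    measurableSet_Ioc measurableSet_Ioc (subset_refl s) self_mem_nhdsWithin
    (by simp [hs_def] : volume s ≠ ⊤) hnφ hlφ hiφ h'iφ hmg hcg
  refine main.congr (fun ε => ?_)
  rw [intervalIntegral.integral_of_le ht.le, ← integral_const_mul]
  refine integral_congr_ae (Eventually.of_forall (fun τ => ?_))
  simp only [hφ_def, hG_def, Complex.real_smul]
  push_cast
  ring
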